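/- Let v be the one-sided gTM fixed point and suppose the limits η(m) = lim_{N→∞} (1/N) ∑_{n=0}^{N-1} v_n v_{n+m} exist for all m ≥ 0. Then η((k+ℓ)m) = η(m) for all m ≥ 0. -/

import Mathlib

open Filter

/-- if `v` is the one-sided gTM fixed point (values `±1`,
`v 0 = 1`, with the self-similarity `v ((k+ℓ)m+r) = ±(v m)`) and the
autocorrelation limits `η m = lim_N (1/N) ∑_{n<N} v n * v (n+m)` exist,
then `η ((k+ℓ) m) = η m` for all `m : ℕ`. -/
theorem gtm_autocorrelation_self_similar (k ℓ : ℕ) (hk : 1 ≤ k) (hℓ : 1 ≤ ℓ)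
    (v : ℕ → ℤ) (hpm : ∀ n, v n = 1 ∨ v n = -1) (hv0 : v 0 = 1)
    (hfix1 : ∀ m r, r < k → v ((k + ℓ) * m + r) = v m)
    (hfix2 : ∀ m r, k ≤ r → r < k + ℓ → v ((k + ℓ) * m + r) = -(v m))
    (η : ℕ → ℝ)
    (hη : ∀ m, Tendsto
      (fun N : ℕ => (1 / (N : ℝ)) * ∑ n ∈ Finset.range N, (v n : ℝ) * (v (n + m) : ℝ))
      atTop (nhds (η m))) :
    ∀ m, η ((k + ℓ) * m) = η m := by
  intro m
  set K := k + ℓ with hKdef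
  have hK2 : 2 ≤ K := by omega
  have key : ∀ q r, r < K → (v (K * q + r) : ℝ) * v (K * (q + m) + r)
      = (v q : ℝ) * v (q + m) := by
    intro q r hr
    rcases lt_or_ge r k with h | h
    · rw [hfix1 q r h, hfix1 (q + m) r h]
    · rw [hfix2 q r h hr, hfix2 (q + m) r h hr]; push_cast; ring
  have sum_eq : ∀ N, ∑ n ∈ Finset.range (K * N), (v n : ℝ) * v (n + K * m)
      = (K : ℝ) * ∑ q ∈ Finset.range N, (v q : ℝ) * v (q + m) := by
    intro N
    induction N with
    | zero => simp
    | succ N ih =>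
      rw [Nat.mul_succ, Finset.sum_range_add, ih, Finset.sum_range_succ]
      have h2 : ∑ r ∈ Finset.range K, (v (K * N + r) : ℝ) * v (K * N + r + K * m)
          = (K : ℝ) * ((v N : ℝ) * v (N + m)) := by
        rw [Finset.sum_congr rfl (fun r hr => ?_), Finset.sum_const, nsmul_eq_mul,
          Finset.card_range]
        have hr' := Finset.mem_range.mp hr
        have h3 : K * N + r + K * m = K * (N + m) + r := by ring
        rw [h3, key N r hr']
      rw [h2]; ring
  have htend : Tendsto (fun N : ℕ => K * N) atTop atTop := by
    apply Filter.tendsto_atTop_atTop.mpr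
    intro b
    exact ⟨b, fun a ha => le_trans ha (Nat.le_mul_of_pos_left a (by omega))⟩
  have h1 := (hη (K * m)).comp htend
  have heq : (fun N : ℕ => (1 / ((K * N : ℕ) : ℝ)) *
        ∑ n ∈ Finset.range (K * N), (v n : ℝ) * v (n + K * m))
      = fun N : ℕ => (1 / (N : ℝ)) * ∑ q ∈ Finset.range N, (v q : ℝ) * v (q + m) := by
    funext N
    rw [sum_eq N]
    rcases Nat.eq_zero_or_pos N with h | h
    · simp [h]
    · have hN : (N : ℝ) ≠ 0 := Nat.cast_ne_zero.mpr (by omega)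
      have hKr : (K : ℝ) ≠ 0 := Nat.cast_ne_zero.mpr (by omega)
      push_cast
      field_simp
  rw [show (fun N : ℕ => (1 / ((K * N : ℕ) : ℝ)) *
        ∑ n ∈ Finset.range (K * N), (v n : ℝ) * v (n + K * m))
      = (fun N : ℕ => (1 / (N : ℝ)) *
        ∑ n ∈ Finset.range N, (v n : ℝ) * v (n + K * m)) ∘ (fun N => K * N) from rfl] at heq
  rw [heq] at h1
  exact tendsto_nhds_unique h1 (hη m)
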